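/- Let P be a polynomial of degree at most m and f continuous on [a,b]. If the deviation g = P - f admits m+2 alternating extreme points on [a,b] with E = sup|g| > 0, then for every polynomial Q of degree at most m, sup_{t∈[a,b]} |Q(t) - f(t)| ≥ E; i.e., P is a best Chebyshev approximation to f among polynomials of degree at most m. -/

import Mathlib

/-- Chebyshev alternation sufficiency: if `P - f` admits `m+2` alternating
extreme points on `[a,b]`, then `P` is a best approximation to `f` among
polynomials of degree at most `m`. -/
theorem chebyshev_alternation_sufficiency
    (a b : ℝ) (hab : a ≤ b) (m : ℕ)
    (P : Polynomial ℝ) (hP : P.natDegree ≤ m)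
    (f : ℝ → ℝ) (hf : ContinuousOn f (Set.Icc a b))
    (E : ℝ) (hEpos : 0 < E)
    (hsup : ∀ x ∈ Set.Icc a b, |P.eval x - f x| ≤ E)
    (t : Fin (m + 2) → ℝ) (ht : StrictMono t)
    (htmem : ∀ i, t i ∈ Set.Icc a b)
    (σ : ℝ) (hσ : σ = 1 ∨ σ = -1)
    (halt : ∀ i : Fin (m + 2),
      σ * (-1 : ℝ) ^ (i : ℕ) * (P.eval (t i) - f (t i)) = E) :
    ∀ Q : Polynomial ℝ, Q.natDegree ≤ m →
      E ≤ sSup ((fun x => |Q.eval x - f x|) '' Set.Icc a b) := by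
  intro Q hQ
  by_contra hcon
  push_neg at hcon
  -- the image is bounded above (compactness)
  have hQcont : Continuous fun x : ℝ => Q.eval x := Q.continuous
  have hQf : ContinuousOn (fun x => |Q.eval x - f x|) (Set.Icc a b) :=
    (hQcont.continuousOn.sub hf).abs
  have hbdd : BddAbove ((fun x => |Q.eval x - f x|) '' Set.Icc a b) :=
    (isCompact_Icc.image_of_continuousOn hQf).bddAbove
  have hlt : ∀ x ∈ Set.Icc a b, |Q.eval x - f x| < E := fun x hx =>
    lt_of_le_of_lt (le_csSup hbdd ⟨x, hx, rfl⟩) hcon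
  set D : Polynomial ℝ := P - Q with hD
  -- sign of D at the alternation points
  have hsign : ∀ i : Fin (m + 2), 0 < σ * (-1 : ℝ) ^ (i : ℕ) * D.eval (t i) := by
    intro i
    have habs : |σ * (-1 : ℝ) ^ (i : ℕ)| = 1 := by
      rcases hσ with h | h <;> simp [h, abs_mul]
    have h1 : σ * (-1 : ℝ) ^ (i : ℕ) * (Q.eval (t i) - f (t i)) < E := by
      calc σ * (-1 : ℝ) ^ (i : ℕ) * (Q.eval (t i) - f (t i))
          ≤ |σ * (-1 : ℝ) ^ (i : ℕ) * (Q.eval (t i) - f (t i))| := le_abs_self _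
        _ = |Q.eval (t i) - f (t i)| := by rw [abs_mul, habs, one_mul]
        _ < E := hlt _ (htmem i)
    have heq : σ * (-1 : ℝ) ^ (i : ℕ) * D.eval (t i)
        = E - σ * (-1 : ℝ) ^ (i : ℕ) * (Q.eval (t i) - f (t i)) := by
      rw [← halt i]; simp [hD]; ring
    rw [heq]
    linarith
  -- D is nonzero
  have hc0 : D.eval (t 0) ≠ 0 := by
    intro h
    have := hsign 0
    rw [h] at this
    simp at this
  have hDne : D ≠ 0 := fun h => hc0 (by rw [h]; simp)
  -- a root between consecutive alternation points
  have hroot : ∀ i : Fin (m + 1),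
      ∃ x, x ∈ Set.Ioo (t i.castSucc) (t i.succ) ∧ D.eval x = 0 := by
    intro i
    have hlt' : t i.castSucc < t i.succ := ht Fin.castSucc_lt_succ
    have hcont : ContinuousOn (fun x => D.eval x) (Set.Icc (t i.castSucc) (t i.succ)) :=
      D.continuous.continuousOn
    have h1 := hsign i.castSucc
    have h2 := hsign i.succ
    have hcs : ((i.castSucc : Fin (m + 2)) : ℕ) = (i : ℕ) := rfl
    have hsc : ((i.succ : Fin (m + 2)) : ℕ) = (i : ℕ) + 1 := rfl
    rw [hcs] at h1
    rw [hsc, pow_succ] at h2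
    have hsq : (σ * (-1 : ℝ) ^ (i : ℕ)) ^ 2 = 1 := by
      have : ((-1 : ℝ) ^ (i : ℕ)) ^ 2 = 1 := by
        rw [← pow_mul, mul_comm, pow_mul]; norm_num
      rcases hσ with h | h <;> rw [h] <;> nlinarith [this]
    have hprod : D.eval (t i.castSucc) * D.eval (t i.succ) < 0 := by
      nlinarith [mul_pos h1 h2, hsq]
    rcases lt_or_ge (D.eval (t i.castSucc)) 0 with hneg | hpos
    · have hv : 0 < D.eval (t i.succ) := by nlinarith
      obtain ⟨x, hx, hx0⟩ :=
        intermediate_value_Ioo (le_of_lt hlt') hcont (Set.mem_Ioo.mpr ⟨hneg, hv⟩)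
      exact ⟨x, hx, hx0⟩
    · have hu : 0 < D.eval (t i.castSucc) := by
        rcases lt_or_eq_of_le hpos with h | h
        · exact h
        · exfalso; rw [← h] at hprod; simp at hprod
      have hv : D.eval (t i.succ) < 0 := by nlinarith
      obtain ⟨x, hx, hx0⟩ :=
        intermediate_value_Ioo' (le_of_lt hlt') hcont (Set.mem_Ioo.mpr ⟨hv, hu⟩)
      exact ⟨x, hx, hx0⟩
  choose r hrmem hrz using hroot
  -- the roots are pairwise distinct
  have hrmono : StrictMono r := by
    intro i j hij
    have h1 : r i < t i.succ := (hrmem i).2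
    have h2 : t j.castSucc < r j := (hrmem j).1
    have h3 : t i.succ ≤ t j.castSucc := by
      apply ht.monotone
      simp only [Fin.le_def, Fin.val_succ, Fin.coe_castSucc]
      omega
    linarith
  have hinj : Function.Injective r := hrmono.injective
  have hmem : ∀ i, r i ∈ D.roots.toFinset := by
    intro i
    simp [Multiset.mem_toFinset, Polynomial.mem_roots hDne, Polynomial.IsRoot, hrz i]
  -- counting roots
  have hsub : Finset.image r Finset.univ ⊆ D.roots.toFinset :=
    Finset.image_subset_iff.mpr fun i _ => hmem i
  have hcard : (m + 1 : ℕ) ≤ D.roots.toFinset.card := by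
    have h := Finset.card_le_card hsub
    rwa [Finset.card_image_of_injective _ hinj, Finset.card_univ, Fintype.card_fin] at h
  have hcard2 : D.roots.toFinset.card ≤ m :=
    le_trans (Multiset.toFinset_card_le _)
      (le_trans (Polynomial.card_roots' D)
        (le_trans (Polynomial.natDegree_sub_le P Q) (max_le hP hQ)))
  omega
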